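/- arXiv:math/9904098 — 2 statements merged into one kernel-verified Lean document; each statement's English description precedes it below -/
import Mathlib

section
/- Consider a coset spectral system which in addition satisfies M(1, 1, x) = 0 for every x ∈ X with x ≠ 1, and define b⁰(i, α) := Σ_{j∈I} Σ_{β∈A} S_{ij} · conj(Ṡ_{αβ}) · M(j, β, 1). If for given (i, α) ∈ I × A there exists x ∈ X with M(i, α, x) > 0, then b⁰(i, α) is a strictly positive real number. -/
open scoped BigOperators

/-- A modular datum `(I, S, ω, C)`: the genus-zero modular matrices data of §2.1. -/
structure ModularDatum (I : Type*) [Fintype I] [DecidableEq I] : Type _ where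
  one : I
  bar : I → I
  bar_invol : Function.Involutive bar
  bar_one : bar one = one
  S : Matrix I I ℂ
  S_symm : ∀ i j, S i j = S j i
  S_unitary : S ∈ Matrix.unitaryGroup I ℂ
  S_one_im : ∀ i, (S one i).im = 0
  S_one_pos : ∀ i, 0 < (S one i).re
  ω : I → ℂ
  ω_abs : ∀ i, ‖ω i‖ = 1
  ω_one : ω one = 1
  ω_bar : ∀ i, ω (bar i) = ω i
  C : ℂ
  C_abs : ‖C‖ = 1
  rel_STS : (S * Matrix.diagonal (fun i => C * ω i)) ^ 3 = S ^ 2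
  rel_Ssq : ∀ i j, (S ^ 2) i j = if j = bar i then 1 else 0

/-- A coset spectral system: three modular data `(I,S,ω,C)`, `(A,Ṡ,ω̇,Ċ)`, `(X,S̈,ω̈,C̈)`,
a nonnegative function `M` on `I × A × X` with `M(1,1,1) = 1`, and a finite spectral index
set `E` with maps `k, δ, ζ` and nonnegative weights `p`, satisfying the conclusions (a)–(d)
of Lemma A of §3.1 of the paper. -/
structure CosetSpectralSystem (I A X E : Type*)
    [Fintype I] [DecidableEq I] [Fintype A] [DecidableEq A]
    [Fintype X] [DecidableEq X] [Fintype E] : Type _ where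
  G : ModularDatum I
  H : ModularDatum A
  Q : ModularDatum X
  M : I → A → X → ℝ
  M_nonneg : ∀ i α x, 0 ≤ M i α x
  M_vac : M G.one H.one Q.one = 1
  k : E → I
  δ : E → A
  ζ : E → X
  p : E → ℝ
  p_nonneg : ∀ e, 0 ≤ p e
  spec : ∀ i α x, (M i α x : ℂ) =
    ∑ e, (G.S (G.bar i) (k e) / G.S G.one (k e)) *
         (H.S α (δ e) / H.S H.one (δ e)) *
         (Q.S x (ζ e) / Q.S Q.one (ζ e)) * (p e : ℂ)
  vac_node : ∃ e₀, k e₀ = G.one ∧ δ e₀ = H.one ∧ ζ e₀ = Q.one ∧ 0 < p e₀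
  phase : ∀ j β y, M j β y ≠ 0 → Q.ω y = G.ω j * (H.ω β)⁻¹
  norm_one : ∑ j, ∑ β, ∑ y,
    G.S G.one j * star (H.S H.one β) * star (Q.S Q.one y) * (M j β y : ℂ) = 1

namespace ModularDatum

variable {I : Type*} [Fintype I] [DecidableEq I] (D : ModularDatum I)

lemma sOne_ne_zero (a : I) : D.S D.one a ≠ 0 := by
  intro h
  have := D.S_one_pos a
  rw [h] at this
  simp at this

lemma omega_ne_zero (a : I) : D.ω a ≠ 0 := by
  intro h
  have := D.ω_abs a
  rw [h] at this
  simp at this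

lemma C_ne_zero : D.C ≠ 0 := by
  intro h
  have := D.C_abs
  rw [h] at this
  simp at this

lemma Comega_ne_zero (a : I) : D.C * D.ω a ≠ 0 :=
  mul_ne_zero D.C_ne_zero (D.omega_ne_zero a)

lemma star_omega (a : I) : star (D.ω a) = (D.ω a)⁻¹ := by
  rw [Complex.inv_eq_conj (D.ω_abs a)]
  rfl

lemma Comega_abs (a : I) : ‖D.C * D.ω a‖ = 1 := by
  rw [norm_mul, D.C_abs, D.ω_abs, one_mul]

lemma star_Comega (a : I) : star (D.C * D.ω a) = (D.C * D.ω a)⁻¹ := by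
  rw [Complex.inv_eq_conj (D.Comega_abs a)]
  rfl

lemma sum_SS (a b : I) : (∑ m, D.S a m * D.S m b) = if b = D.bar a then 1 else 0 := by
  have := D.rel_Ssq a b
  rw [pow_two, Matrix.mul_apply] at this
  exact this

/-- the charge conjugation matrix -/
private def K : Matrix I I ℂ := Matrix.of fun a b => if b = D.bar a then 1 else 0

private lemma SS_eq_K : D.S * D.S = D.K := by
  ext a b
  rw [Matrix.mul_apply, D.sum_SS]
  rfl

private lemma KK_eq_one : D.K * D.K = 1 := by
  ext a b
  rw [Matrix.mul_apply, Matrix.one_apply]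
  simp only [K, Matrix.of_apply, ite_mul, one_mul, zero_mul]
  rw [Finset.sum_ite_eq' Finset.univ (D.bar a) (fun c => if b = D.bar c then 1 else 0)]
  simp [D.bar_invol a, eq_comm]

private lemma SK_eq_one : D.S * (D.S * D.K) = 1 := by
  rw [← mul_assoc, D.SS_eq_K, D.KK_eq_one]

lemma conjTranspose_eq : (Matrix.conjTranspose D.S) = D.S * D.K := by
  have hu : (Matrix.conjTranspose D.S) * D.S = 1 := by
    have := (Unitary.mem_iff.mp D.S_unitary).1
    rwa [Matrix.star_eq_conjTranspose] at this
  calc (Matrix.conjTranspose D.S) = (Matrix.conjTranspose D.S) * (D.S * (D.S * D.K)) := by rw [D.SK_eq_one, mul_one]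
    _ = ((Matrix.conjTranspose D.S) * D.S) * (D.S * D.K) := by rw [mul_assoc]
    _ = D.S * D.K := by rw [hu, one_mul]

lemma star_apply_left (a b : I) : star (D.S a b) = D.S (D.bar a) b := by
  have h := congrFun (congrFun D.conjTranspose_eq b) a
  rw [Matrix.conjTranspose_apply, Matrix.mul_apply] at h
  have hcond : ∀ m : I, (a = D.bar m) ↔ (m = D.bar a) :=
    fun m => ⟨fun hc => by rw [hc, D.bar_invol], fun hc => by rw [hc, D.bar_invol]⟩
  have h2 : (∑ m, D.S b m * D.K m a) = D.S b (D.bar a) := by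
    have hterm : ∀ m : I, D.S b m * D.K m a = if m = D.bar a then D.S b m else 0 := by
      intro m
      simp only [K, Matrix.of_apply]
      by_cases hc : m = D.bar a
      · rw [if_pos ((hcond m).mpr hc), if_pos hc, mul_one]
      · have hnc : ¬ (a = D.bar m) := fun hh => hc ((hcond m).mp hh)
        rw [if_neg hnc, if_neg hc, mul_zero]
    rw [Finset.sum_congr rfl (fun m _ => hterm m),
      Finset.sum_ite_eq' Finset.univ (D.bar a) (fun m => D.S b m)]
    simp
  rw [h2] at h
  rw [h, D.S_symm]

lemma star_apply_right (a b : I) : star (D.S a b) = D.S a (D.bar b) := by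
  rw [D.S_symm a b, D.star_apply_left, D.S_symm]

lemma sOne_real (a : I) : star (D.S D.one a) = D.S D.one a := by
  rw [Complex.star_def, Complex.conj_eq_iff_im]
  exact D.S_one_im a

lemma sOne_bar (a : I) : D.S D.one (D.bar a) = D.S D.one a := by
  rw [← D.star_apply_right, D.sOne_real]

lemma bar_flip (a b : I) : D.S (D.bar a) b = D.S a (D.bar b) := by
  rw [← D.star_apply_left, D.star_apply_right]

lemma omega_bar' (a : I) : D.ω (D.bar a) = D.ω a := D.ω_bar a

/-- The diagonal T matrix. -/
private def T : Matrix I I ℂ := Matrix.diagonal (fun i => D.C * D.ω i)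

private noncomputable def Tinv : Matrix I I ℂ := Matrix.diagonal (fun i => (D.C * D.ω i)⁻¹)

private lemma T_Tinv : D.T * D.Tinv = 1 := by
  rw [T, Tinv, Matrix.diagonal_mul_diagonal]
  rw [show (fun i => (D.C * D.ω i) * (D.C * D.ω i)⁻¹) = fun _ => (1:ℂ) from
    funext fun i => mul_inv_cancel₀ (D.Comega_ne_zero i)]
  exact Matrix.diagonal_one

private lemma Tinv_T : D.Tinv * D.T = 1 := by
  rw [T, Tinv, Matrix.diagonal_mul_diagonal]
  rw [show (fun i => (D.C * D.ω i)⁻¹ * (D.C * D.ω i)) = fun _ => (1:ℂ) from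
    funext fun i => inv_mul_cancel₀ (D.Comega_ne_zero i)]
  exact Matrix.diagonal_one

private lemma STS_eq : D.S * (D.T * D.S) = D.Tinv * (D.S * D.Tinv) := by
  have h0 : (D.S * D.T) ^ 3 = D.S ^ 2 := D.rel_STS
  have h1 : D.S * (D.T * (D.S * (D.T * (D.S * D.T)))) = D.S * D.S := by
    have e1 : (D.S * D.T) ^ 3 = (D.S * D.T) * ((D.S * D.T) * (D.S * D.T)) := by
      rw [pow_succ, pow_two, mul_assoc]
    rw [e1, pow_two] at h0
    calc D.S * (D.T * (D.S * (D.T * (D.S * D.T))))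
        = (D.S * D.T) * ((D.S * D.T) * (D.S * D.T)) := by
          simp only [mul_assoc]
      _ = D.S * D.S := h0
  -- cancel S on the left using left inverse K * S
  have hKS : (D.K * D.S) * D.S = 1 := by
    rw [mul_assoc, D.SS_eq_K, D.KK_eq_one]
  have h2 : D.T * (D.S * (D.T * (D.S * D.T))) = D.S := by
    calc D.T * (D.S * (D.T * (D.S * D.T)))
        = ((D.K * D.S) * D.S) * (D.T * (D.S * (D.T * (D.S * D.T)))) := by
          rw [hKS, one_mul]
      _ = (D.K * D.S) * (D.S * (D.T * (D.S * (D.T * (D.S * D.T))))) := by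
          simp only [mul_assoc]
      _ = (D.K * D.S) * (D.S * D.S) := by rw [h1]
      _ = ((D.K * D.S) * D.S) * D.S := by simp only [mul_assoc]
      _ = D.S := by rw [hKS, one_mul]
  -- multiply by Tinv left and right
  calc D.S * (D.T * D.S)
      = (D.Tinv * D.T) * (D.S * (D.T * (D.S * (D.T * D.Tinv)))) := by
        rw [D.Tinv_T, D.T_Tinv, one_mul, mul_one]
    _ = D.Tinv * ((D.T * (D.S * (D.T * (D.S * D.T)))) * D.Tinv) := by
        simp only [mul_assoc]
    _ = D.Tinv * (D.S * D.Tinv) := by rw [h2]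

/-- entrywise Gauss identity -/
lemma gauss1 (a b : I) :
    (∑ m, D.S a m * ((D.C * D.ω m) * D.S m b))
      = (D.C * D.ω a)⁻¹ * (D.S a b * (D.C * D.ω b)⁻¹) := by
  have h := congrFun (congrFun D.STS_eq a) b
  have hl : (D.S * (D.T * D.S)) a b = ∑ m, D.S a m * ((D.C * D.ω m) * D.S m b) := by
    rw [Matrix.mul_apply]
    refine Finset.sum_congr rfl fun m _ => ?_
    rw [show (D.T * D.S) m b = (D.C * D.ω m) * D.S m b from by
      rw [T, Matrix.diagonal_mul]]
  have hr : (D.Tinv * (D.S * D.Tinv)) a b = (D.C * D.ω a)⁻¹ * (D.S a b * (D.C * D.ω b)⁻¹) := by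
    rw [Tinv, Matrix.diagonal_mul, Matrix.mul_diagonal]
  rw [← hl, ← hr, h]

lemma C3_ne_zero : (D.C)^3 ≠ 0 := pow_ne_zero 3 D.C_ne_zero

/-- Gauss sum, first row. -/
lemma gauss_row_one (b : I) :
    (∑ m, D.S D.one m * D.ω m * D.S m b)
      = (D.C^3)⁻¹ * (D.ω b)⁻¹ * D.S D.one b := by
  have h := D.gauss1 D.one b
  have h2 : (∑ m, D.S D.one m * ((D.C * D.ω m) * D.S m b))
      = D.C * ∑ m, D.S D.one m * D.ω m * D.S m b := by
    rw [Finset.mul_sum]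
    exact Finset.sum_congr rfl fun m _ => by ring
  rw [h2, D.ω_one, mul_one] at h
  have hC := D.C_ne_zero
  have hω := D.omega_ne_zero b
  field_simp at h ⊢
  linear_combination h

/-- Gauss sum with a bar: `∑_j S_{aj} ω_j S_{j̄ b} = C⁻³ ω_a⁻¹ ω_b⁻¹ S_{ā b}`. -/
lemma gauss_bar (a b : I) :
    (∑ m, D.S a m * D.ω m * D.S (D.bar m) b)
      = (D.C^3)⁻¹ * ((D.ω a)⁻¹ * ((D.ω b)⁻¹ * D.S (D.bar a) b)) := by
  have h := D.gauss1 a (D.bar b)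
  have h2 : (∑ m, D.S a m * ((D.C * D.ω m) * D.S m (D.bar b)))
      = D.C * ∑ m, D.S a m * D.ω m * D.S (D.bar m) b := by
    rw [Finset.mul_sum]
    refine Finset.sum_congr rfl fun m _ => ?_
    rw [D.bar_flip m b]
    ring
  rw [h2] at h
  rw [← D.bar_flip a b] at h
  rw [D.omega_bar'] at h
  have hC := D.C_ne_zero
  have hωa := D.omega_ne_zero a
  have hωb := D.omega_ne_zero b
  field_simp at h ⊢
  linear_combination h

/-- conjugated Gauss sum: `∑_m star(S_{am}) ω_m⁻¹ S_{mb} = C³ ω_a ω_b S_{ab}`. -/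
lemma gauss_star (a b : I) :
    (∑ m, star (D.S a m) * (D.ω m)⁻¹ * D.S m b)
      = D.C^3 * (D.ω a * (D.ω b * D.S a b)) := by
  have h := D.gauss1 a (D.bar b)
  have h2 := congrArg star h
  rw [star_sum] at h2
  have h3 : ∀ m : I, star (D.S a m * ((D.C * D.ω m) * D.S m (D.bar b)))
      = (D.C)⁻¹ * (star (D.S a m) * (D.ω m)⁻¹ * D.S m b) := by
    intro m
    rw [star_mul', star_mul', D.star_Comega, D.star_apply_right m (D.bar b), D.bar_invol]
    rw [mul_inv]
    ring
  rw [Finset.sum_congr rfl (fun m _ => h3 m)] at h2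
  rw [← Finset.mul_sum] at h2
  have h4 : star ((D.C * D.ω a)⁻¹ * (D.S a (D.bar b) * (D.C * D.ω (D.bar b))⁻¹))
      = (D.C * D.ω a) * (D.S a b * (D.C * D.ω b)) := by
    rw [star_mul', star_mul', star_inv₀, star_inv₀, D.star_Comega, D.star_Comega,
      inv_inv, inv_inv, D.star_apply_right a (D.bar b), D.bar_invol, D.omega_bar']
  rw [h4] at h2
  have hC := D.C_ne_zero
  have h5 := congrArg (fun z => D.C * z) h2
  rw [← mul_assoc, mul_inv_cancel₀ hC, one_mul] at h5
  rw [h5]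
  ring

/-- first-row inverse Gauss: `∑_j S_{1j} ω_j⁻¹ S_{j̄ b} = C³ ω_b S_{1b}`. -/
lemma gauss_row_one_inv (b : I) :
    (∑ m, D.S D.one m * (D.ω m)⁻¹ * D.S (D.bar m) b)
      = D.C^3 * (D.ω b * D.S D.one b) := by
  have h := D.gauss_star D.one (D.bar b)
  have h2 : (∑ m, star (D.S D.one m) * (D.ω m)⁻¹ * D.S m (D.bar b))
      = ∑ m, D.S D.one m * (D.ω m)⁻¹ * D.S (D.bar m) b := by
    refine Finset.sum_congr rfl fun m _ => ?_
    rw [D.sOne_real, D.bar_flip m b]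
  rw [h2] at h
  rw [h, D.ω_one, D.omega_bar', D.sOne_bar, one_mul]

/-- plain double-S sum with a bar: `∑_m S_{am} S_{m̄ b} = δ_{ab}`. -/
lemma sum_S_barS (a b : I) :
    (∑ m, D.S a m * D.S (D.bar m) b) = if b = a then 1 else 0 := by
  have h2 : (∑ m, D.S a m * D.S (D.bar m) b) = ∑ m, D.S a m * D.S m (D.bar b) := by
    refine Finset.sum_congr rfl fun m _ => ?_
    rw [D.bar_flip m b]
  rw [h2, D.sum_SS]
  simp only [D.bar_invol.injective.eq_iff]

/-- `∑_β star(S_{αβ}) S_{βd} = δ_{dα}`. -/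
lemma sum_starS_S (a b : I) :
    (∑ m, star (D.S a m) * D.S m b) = if b = a then 1 else 0 := by
  have h2 : (∑ m, star (D.S a m) * D.S m b) = ∑ m, D.S (D.bar a) m * D.S m b := by
    refine Finset.sum_congr rfl fun m _ => ?_
    rw [D.star_apply_left]
  rw [h2, D.sum_SS, D.bar_invol]

/-- column version: `∑_y star(S_{yz}) S_{yz'} = δ_{z'z}`. -/
lemma sum_starS_S_col (z z' : I) :
    (∑ y, star (D.S y z) * D.S y z') = if z' = z then 1 else 0 := by
  have h2 : (∑ y, star (D.S y z) * D.S y z') = ∑ y, star (D.S z y) * D.S y z' := by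
    refine Finset.sum_congr rfl fun y _ => ?_
    rw [D.S_symm z y]
  rw [h2, D.sum_starS_S]

/-- `∑_y S_{1y} S_{yz} = δ_{z,1}`. -/
lemma sum_row_one_S (z : I) :
    (∑ y, D.S D.one y * D.S y z) = if z = D.one then 1 else 0 := by
  rw [D.sum_SS, D.bar_one]

end ModularDatum

namespace CosetSpectralSystem

variable {I A X E : Type*}
    [Fintype I] [DecidableEq I] [Fintype A] [DecidableEq A]
    [Fintype X] [DecidableEq X] [Fintype E] (𝒮 : CosetSpectralSystem I A X E)

private lemma sum4_swap (f : I → A → X → E → ℂ) :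
    (∑ j, ∑ β, ∑ y, ∑ e, f j β y e) = ∑ e, ∑ j, ∑ β, ∑ y, f j β y e := by
  calc (∑ j, ∑ β, ∑ y, ∑ e, f j β y e)
      = ∑ j, ∑ β, ∑ e, ∑ y, f j β y e :=
        Finset.sum_congr rfl fun j _ => Finset.sum_congr rfl fun β _ => Finset.sum_comm
    _ = ∑ j, ∑ e, ∑ β, ∑ y, f j β y e :=
        Finset.sum_congr rfl fun j _ => Finset.sum_comm
    _ = ∑ e, ∑ j, ∑ β, ∑ y, f j β y e := Finset.sum_comm

private lemma sum3_rot (f : I → A → X → ℂ) :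
    (∑ y : X, ∑ β : A, ∑ j : I, f j β y) = ∑ j, ∑ β, ∑ y, f j β y := by
  calc (∑ y : X, ∑ β : A, ∑ j : I, f j β y)
      = ∑ y : X, ∑ j : I, ∑ β : A, f j β y :=
        Finset.sum_congr rfl fun y _ => Finset.sum_comm
    _ = ∑ j : I, ∑ y : X, ∑ β : A, f j β y := Finset.sum_comm
    _ = ∑ j, ∑ β, ∑ y, f j β y :=
        Finset.sum_congr rfl fun j _ => Finset.sum_comm

private lemma sum_mul_div {κ : Type*} [Fintype κ] (f g : κ → ℂ) (c : ℂ) :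
    (∑ x, f x * (g x / c)) = (∑ x, f x * g x) / c := by
  rw [Finset.sum_div]
  exact Finset.sum_congr rfl fun x _ => (mul_div_assoc _ _ _).symm

/-- Master spectral expansion of a weighted triple sum. -/
lemma triple_eval (F : I → ℂ) (Gf : A → ℂ) (Hf : X → ℂ) :
    (∑ j, ∑ β, ∑ y, F j * Gf β * Hf y * (𝒮.M j β y : ℂ))
      = ∑ e, (∑ j, F j * (𝒮.G.S (𝒮.G.bar j) (𝒮.k e) / 𝒮.G.S 𝒮.G.one (𝒮.k e)))
          * (∑ β, Gf β * (𝒮.H.S β (𝒮.δ e) / 𝒮.H.S 𝒮.H.one (𝒮.δ e)))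
          * (∑ y, Hf y * (𝒮.Q.S y (𝒮.ζ e) / 𝒮.Q.S 𝒮.Q.one (𝒮.ζ e)))
          * (𝒮.p e : ℂ) := by
  have step1 : (∑ j, ∑ β, ∑ y, F j * Gf β * Hf y * (𝒮.M j β y : ℂ))
      = ∑ j, ∑ β, ∑ y, ∑ e, F j * Gf β * Hf y *
        ((𝒮.G.S (𝒮.G.bar j) (𝒮.k e) / 𝒮.G.S 𝒮.G.one (𝒮.k e)) *
         (𝒮.H.S β (𝒮.δ e) / 𝒮.H.S 𝒮.H.one (𝒮.δ e)) *
         (𝒮.Q.S y (𝒮.ζ e) / 𝒮.Q.S 𝒮.Q.one (𝒮.ζ e)) * (𝒮.p e : ℂ)) := by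
    refine Finset.sum_congr rfl fun j _ => Finset.sum_congr rfl fun β _ =>
      Finset.sum_congr rfl fun y _ => ?_
    rw [𝒮.spec j β y]
    simp only [Finset.mul_sum]
  have step2 : (∑ j, ∑ β, ∑ y, ∑ e, F j * Gf β * Hf y *
        ((𝒮.G.S (𝒮.G.bar j) (𝒮.k e) / 𝒮.G.S 𝒮.G.one (𝒮.k e)) *
         (𝒮.H.S β (𝒮.δ e) / 𝒮.H.S 𝒮.H.one (𝒮.δ e)) *
         (𝒮.Q.S y (𝒮.ζ e) / 𝒮.Q.S 𝒮.Q.one (𝒮.ζ e)) * (𝒮.p e : ℂ)))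
      = ∑ e, ∑ j, ∑ β, ∑ y, F j * Gf β * Hf y *
        ((𝒮.G.S (𝒮.G.bar j) (𝒮.k e) / 𝒮.G.S 𝒮.G.one (𝒮.k e)) *
         (𝒮.H.S β (𝒮.δ e) / 𝒮.H.S 𝒮.H.one (𝒮.δ e)) *
         (𝒮.Q.S y (𝒮.ζ e) / 𝒮.Q.S 𝒮.Q.one (𝒮.ζ e)) * (𝒮.p e : ℂ)) :=
    sum4_swap _
  rw [step1, step2]
  refine Finset.sum_congr rfl fun e _ => ?_
  simp only [Finset.sum_mul, Finset.mul_sum]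
  rw [← sum3_rot]
  refine Finset.sum_congr rfl fun y _ => Finset.sum_congr rfl fun β _ =>
    Finset.sum_congr rfl fun j _ => ?_
  ring

lemma phase_term (j : I) (β : A) (y : X) :
    𝒮.Q.ω y * (𝒮.M j β y : ℂ) = 𝒮.G.ω j * (𝒮.H.ω β)⁻¹ * (𝒮.M j β y : ℂ) := by
  by_cases h : 𝒮.M j β y = 0
  · rw [h]; push_cast; ring
  · rw [𝒮.phase j β y h]

lemma norm_one' :
    (∑ j, ∑ β, ∑ y, 𝒮.G.S 𝒮.G.one j * 𝒮.H.S 𝒮.H.one β * 𝒮.Q.S 𝒮.Q.one y * (𝒮.M j β y : ℂ)) = 1 := by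
  rw [← 𝒮.norm_one]
  refine Finset.sum_congr rfl fun j _ => Finset.sum_congr rfl fun β _ =>
    Finset.sum_congr rfl fun y _ => ?_
  rw [𝒮.H.sOne_real, 𝒮.Q.sOne_real]

/-- phase weight of a node -/
noncomputable def w (e : E) : ℂ :=
  𝒮.G.ω (𝒮.k e) * (𝒮.H.ω (𝒮.δ e))⁻¹ * (𝒮.Q.ω (𝒮.ζ e))⁻¹

lemma w_abs (e : E) : ‖𝒮.w e‖ = 1 := by
  rw [w, norm_mul, norm_mul, norm_inv, norm_inv, 𝒮.G.ω_abs, 𝒮.H.ω_abs, 𝒮.Q.ω_abs]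
  norm_num

/-- the Θ-identity: total p-mass twisted by phases. -/
lemma CCC_mul_sum :
    (𝒮.G.C ^ 3 * (𝒮.H.C ^ 3)⁻¹ * (𝒮.Q.C ^ 3)⁻¹) * (∑ e, (𝒮.p e : ℂ) * 𝒮.w e) = 1 := by
  have key : ∀ (j : I) (β : A) (y : X),
      (𝒮.G.ω j)⁻¹ * (𝒮.H.ω β * (𝒮.Q.ω y * (𝒮.M j β y : ℂ))) = (𝒮.M j β y : ℂ) := by
    intro j β y
    rw [𝒮.phase_term j β y]
    rw [show (𝒮.G.ω j)⁻¹ * (𝒮.H.ω β * (𝒮.G.ω j * (𝒮.H.ω β)⁻¹ * (𝒮.M j β y : ℂ)))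
        = ((𝒮.G.ω j)⁻¹ * 𝒮.G.ω j) * ((𝒮.H.ω β) * (𝒮.H.ω β)⁻¹) * (𝒮.M j β y : ℂ) from by ring,
      inv_mul_cancel₀ (𝒮.G.omega_ne_zero j), mul_inv_cancel₀ (𝒮.H.omega_ne_zero β),
      one_mul, one_mul]
  have hTheta : (∑ j, ∑ β, ∑ y, (𝒮.G.S 𝒮.G.one j * (𝒮.G.ω j)⁻¹)
      * (𝒮.H.S 𝒮.H.one β * 𝒮.H.ω β) * (𝒮.Q.S 𝒮.Q.one y * 𝒮.Q.ω y) * (𝒮.M j β y : ℂ)) = 1 := by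
    rw [← 𝒮.norm_one']
    refine Finset.sum_congr rfl fun j _ => Finset.sum_congr rfl fun β _ =>
      Finset.sum_congr rfl fun y _ => ?_
    rw [show (𝒮.G.S 𝒮.G.one j * (𝒮.G.ω j)⁻¹) * (𝒮.H.S 𝒮.H.one β * 𝒮.H.ω β)
        * (𝒮.Q.S 𝒮.Q.one y * 𝒮.Q.ω y) * (𝒮.M j β y : ℂ)
        = (𝒮.G.S 𝒮.G.one j * 𝒮.H.S 𝒮.H.one β * 𝒮.Q.S 𝒮.Q.one y)
          * ((𝒮.G.ω j)⁻¹ * (𝒮.H.ω β * (𝒮.Q.ω y * (𝒮.M j β y : ℂ)))) from by ring,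
      key j β y]
  rw [𝒮.triple_eval (fun j => 𝒮.G.S 𝒮.G.one j * (𝒮.G.ω j)⁻¹)
    (fun β => 𝒮.H.S 𝒮.H.one β * 𝒮.H.ω β) (fun y => 𝒮.Q.S 𝒮.Q.one y * 𝒮.Q.ω y)] at hTheta
  have hI : ∀ kk : I, (∑ j, (𝒮.G.S 𝒮.G.one j * (𝒮.G.ω j)⁻¹)
      * (𝒮.G.S (𝒮.G.bar j) kk / 𝒮.G.S 𝒮.G.one kk)) = 𝒮.G.C ^ 3 * 𝒮.G.ω kk := by
    intro kk
    rw [sum_mul_div, 𝒮.G.gauss_row_one_inv kk,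
      show 𝒮.G.C ^ 3 * (𝒮.G.ω kk * 𝒮.G.S 𝒮.G.one kk)
        = (𝒮.G.C ^ 3 * 𝒮.G.ω kk) * 𝒮.G.S 𝒮.G.one kk from by ring,
      mul_div_cancel_right₀ _ (𝒮.G.sOne_ne_zero kk)]
  have hA : ∀ dd : A, (∑ β, (𝒮.H.S 𝒮.H.one β * 𝒮.H.ω β)
      * (𝒮.H.S β dd / 𝒮.H.S 𝒮.H.one dd)) = (𝒮.H.C ^ 3)⁻¹ * (𝒮.H.ω dd)⁻¹ := by
    intro dd
    rw [sum_mul_div, 𝒮.H.gauss_row_one dd, mul_div_cancel_right₀ _ (𝒮.H.sOne_ne_zero dd)]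
  have hX : ∀ zz : X, (∑ y, (𝒮.Q.S 𝒮.Q.one y * 𝒮.Q.ω y)
      * (𝒮.Q.S y zz / 𝒮.Q.S 𝒮.Q.one zz)) = (𝒮.Q.C ^ 3)⁻¹ * (𝒮.Q.ω zz)⁻¹ := by
    intro zz
    rw [sum_mul_div, 𝒮.Q.gauss_row_one zz, mul_div_cancel_right₀ _ (𝒮.Q.sOne_ne_zero zz)]
  calc (𝒮.G.C ^ 3 * (𝒮.H.C ^ 3)⁻¹ * (𝒮.Q.C ^ 3)⁻¹) * (∑ e, (𝒮.p e : ℂ) * 𝒮.w e)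
      = ∑ e, (𝒮.G.C ^ 3 * 𝒮.G.ω (𝒮.k e))
          * ((𝒮.H.C ^ 3)⁻¹ * (𝒮.H.ω (𝒮.δ e))⁻¹)
          * ((𝒮.Q.C ^ 3)⁻¹ * (𝒮.Q.ω (𝒮.ζ e))⁻¹) * (𝒮.p e : ℂ) := by
        rw [Finset.mul_sum]
        refine Finset.sum_congr rfl fun e _ => ?_
        rw [w]
        ring
    _ = 1 := by
        rw [← hTheta]
        exact Finset.sum_congr rfl fun e _ => by
          rw [← hI (𝒮.k e), ← hA (𝒮.δ e), ← hX (𝒮.ζ e)]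

private lemma eq_one_of_abs_re {z : ℂ} (h1 : ‖z‖ = 1) (h2 : z.re = 1) : z = 1 := by
  have hsq : Complex.normSq z = 1 := by
    have := congrArg (fun t : ℝ => t ^ 2) h1
    simp only [one_pow] at this
    rw [Complex.sq_norm] at this
    exact this
  rw [Complex.normSq_apply, h2, one_mul] at hsq
  have him : z.im = 0 := by
    have : z.im * z.im = 0 := by linarith
    exact mul_self_eq_zero.mp this
  exact Complex.ext h2 him

lemma collapse_ind (f : X → ℂ) :
    (∑ j, ∑ β, ∑ y, (if j = 𝒮.G.one then (1:ℂ) else 0)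
      * (if β = 𝒮.H.one then (1:ℂ) else 0) * f y * (𝒮.M j β y : ℂ))
    = ∑ y, f y * (𝒮.M 𝒮.G.one 𝒮.H.one y : ℂ) := by
  rw [Finset.sum_eq_single 𝒮.G.one]
  · rw [Finset.sum_eq_single 𝒮.H.one]
    · refine Finset.sum_congr rfl fun y _ => by simp
    · intro b _ hb
      apply Finset.sum_eq_zero
      intro y _
      simp [hb]
    · intro h; exact absurd (Finset.mem_univ _) h
  · intro b _ hb
    apply Finset.sum_eq_zero; intro β _; apply Finset.sum_eq_zero; intro y _
    simp [hb]
  · intro h; exact absurd (Finset.mem_univ _) h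

lemma ind_sum_G (kk : I) :
    (∑ j, (if j = 𝒮.G.one then (1:ℂ) else 0)
      * (𝒮.G.S (𝒮.G.bar j) kk / 𝒮.G.S 𝒮.G.one kk)) = 1 := by
  simp only [ite_mul, one_mul, zero_mul, Finset.sum_ite_eq', Finset.mem_univ, if_true]
  rw [𝒮.G.bar_one]
  exact div_self (𝒮.G.sOne_ne_zero kk)

lemma ind_sum_H (dd : A) :
    (∑ β, (if β = 𝒮.H.one then (1:ℂ) else 0)
      * (𝒮.H.S β dd / 𝒮.H.S 𝒮.H.one dd)) = 1 := by
  simp only [ite_mul, one_mul, zero_mul, Finset.sum_ite_eq', Finset.mem_univ, if_true]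
  exact div_self (𝒮.H.sOne_ne_zero dd)

/-- column mass: `∑_{e : ζ e = z} p e = S̈₁z²`. -/
lemma col_mass (hM : ∀ x : X, x ≠ 𝒮.Q.one → 𝒮.M 𝒮.G.one 𝒮.H.one x = 0) (z : X) :
    (∑ e, if 𝒮.ζ e = z then (𝒮.p e : ℂ) else 0)
      = 𝒮.Q.S 𝒮.Q.one z * 𝒮.Q.S 𝒮.Q.one z := by
  have lhs1 : (∑ y, star (𝒮.Q.S y z) * (𝒮.M 𝒮.G.one 𝒮.H.one y : ℂ)) = 𝒮.Q.S 𝒮.Q.one z := by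
    rw [Finset.sum_eq_single 𝒮.Q.one]
    · rw [𝒮.M_vac]
      push_cast
      rw [mul_one, 𝒮.Q.sOne_real]
    · intro b _ hb
      rw [hM b hb]
      push_cast
      rw [mul_zero]
    · intro h; exact absurd (Finset.mem_univ _) h
  have lhs2 : (∑ y, star (𝒮.Q.S y z) * (𝒮.M 𝒮.G.one 𝒮.H.one y : ℂ))
      = (∑ e, if 𝒮.ζ e = z then (𝒮.p e : ℂ) else 0) / 𝒮.Q.S 𝒮.Q.one z := by
    rw [← 𝒮.collapse_ind (fun y => star (𝒮.Q.S y z)),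
      𝒮.triple_eval (fun j => if j = 𝒮.G.one then (1:ℂ) else 0)
        (fun β => if β = 𝒮.H.one then (1:ℂ) else 0) (fun y => star (𝒮.Q.S y z))]
    have hterm : ∀ e : E, (∑ j, (if j = 𝒮.G.one then (1:ℂ) else 0)
          * (𝒮.G.S (𝒮.G.bar j) (𝒮.k e) / 𝒮.G.S 𝒮.G.one (𝒮.k e)))
        * (∑ β, (if β = 𝒮.H.one then (1:ℂ) else 0)
          * (𝒮.H.S β (𝒮.δ e) / 𝒮.H.S 𝒮.H.one (𝒮.δ e)))
        * (∑ y, star (𝒮.Q.S y z) * (𝒮.Q.S y (𝒮.ζ e) / 𝒮.Q.S 𝒮.Q.one (𝒮.ζ e)))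
        * (𝒮.p e : ℂ)
        = (if 𝒮.ζ e = z then (𝒮.p e : ℂ) else 0) / 𝒮.Q.S 𝒮.Q.one z := by
      intro e
      rw [𝒮.ind_sum_G (𝒮.k e), 𝒮.ind_sum_H (𝒮.δ e), one_mul, one_mul,
        sum_mul_div, 𝒮.Q.sum_starS_S_col z (𝒮.ζ e)]
      by_cases hz : 𝒮.ζ e = z
      · rw [if_pos hz, if_pos hz, hz]
        ring
      · rw [if_neg hz, if_neg hz, zero_div, zero_div, zero_mul]
    rw [Finset.sum_congr rfl fun e _ => hterm e, ← Finset.sum_div]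
  rw [lhs2] at lhs1
  rw [div_eq_iff (𝒮.Q.sOne_ne_zero z)] at lhs1
  exact lhs1

lemma sum_p_eq_one (hM : ∀ x : X, x ≠ 𝒮.Q.one → 𝒮.M 𝒮.G.one 𝒮.H.one x = 0) :
    (∑ e, 𝒮.p e) = 1 := by
  have hC : (∑ e, (𝒮.p e : ℂ)) = 1 := by
    have h1 : ∀ e : E, (𝒮.p e : ℂ) = ∑ z, if 𝒮.ζ e = z then (𝒮.p e : ℂ) else 0 := by
      intro e
      rw [Finset.sum_ite_eq]
      simp
    rw [Finset.sum_congr rfl fun e _ => h1 e, Finset.sum_comm,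
      Finset.sum_congr rfl fun z _ => 𝒮.col_mass hM z]
    have h2 : ∀ z : X, 𝒮.Q.S 𝒮.Q.one z * 𝒮.Q.S 𝒮.Q.one z
        = 𝒮.Q.S 𝒮.Q.one z * 𝒮.Q.S z 𝒮.Q.one := fun z => by
      rw [𝒮.Q.S_symm z 𝒮.Q.one]
    rw [Finset.sum_congr rfl fun z _ => h2 z, 𝒮.Q.sum_SS, 𝒮.Q.bar_one, if_pos rfl]
  exact_mod_cast hC

lemma u_abs : ‖𝒮.G.C ^ 3 * (𝒮.H.C ^ 3)⁻¹ * (𝒮.Q.C ^ 3)⁻¹‖ = 1 := by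
  rw [norm_mul, norm_mul, norm_inv, norm_inv, norm_pow, norm_pow, norm_pow,
    𝒮.G.C_abs, 𝒮.H.C_abs, 𝒮.Q.C_abs]
  norm_num

/-- the saturation argument: support lemma + u = 1. -/
lemma saturation (hM : ∀ x : X, x ≠ 𝒮.Q.one → 𝒮.M 𝒮.G.one 𝒮.H.one x = 0) :
    (𝒮.G.C ^ 3 * (𝒮.H.C ^ 3)⁻¹ * (𝒮.Q.C ^ 3)⁻¹ = 1)
      ∧ ∀ e : E, 𝒮.p e ≠ 0 → 𝒮.w e = 1 := by
  set u : ℂ := 𝒮.G.C ^ 3 * (𝒮.H.C ^ 3)⁻¹ * (𝒮.Q.C ^ 3)⁻¹ with hu_def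
  have hsum : (∑ e, (𝒮.p e : ℂ) * (u * 𝒮.w e)) = 1 := by
    rw [← 𝒮.CCC_mul_sum, Finset.mul_sum]
    exact Finset.sum_congr rfl fun e _ => by ring
  have habs : ∀ e : E, ‖u * 𝒮.w e‖ = 1 := by
    intro e
    rw [norm_mul, 𝒮.u_abs, 𝒮.w_abs, mul_one]
  have hre : (∑ e, 𝒮.p e * (u * 𝒮.w e).re) = 1 := by
    have := congrArg Complex.re hsum
    rwa [Complex.re_sum, Finset.sum_congr rfl
      (fun e _ => by rw [Complex.re_ofReal_mul] : ∀ e ∈ Finset.univ,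
        ((𝒮.p e : ℂ) * (u * 𝒮.w e)).re = 𝒮.p e * (u * 𝒮.w e).re), Complex.one_re] at this
  have hzero : (∑ e, 𝒮.p e * (1 - (u * 𝒮.w e).re)) = 0 := by
    have expand : ∀ e : E, 𝒮.p e * (1 - (u * 𝒮.w e).re)
        = 𝒮.p e - 𝒮.p e * (u * 𝒮.w e).re := fun e => by ring
    rw [Finset.sum_congr rfl fun e _ => expand e, Finset.sum_sub_distrib,
      𝒮.sum_p_eq_one hM, hre, sub_self]
  have hnn : ∀ e ∈ Finset.univ, (0:ℝ) ≤ 𝒮.p e * (1 - (u * 𝒮.w e).re) := by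
    intro e _
    apply mul_nonneg (𝒮.p_nonneg e)
    have h1 : (u * 𝒮.w e).re ≤ 1 := by
      calc (u * 𝒮.w e).re ≤ ‖u * 𝒮.w e‖ := Complex.re_le_norm _
        _ = 1 := habs e
    linarith
  have hallzero := (Finset.sum_eq_zero_iff_of_nonneg hnn).mp hzero
  have hsupp : ∀ e : E, 𝒮.p e ≠ 0 → u * 𝒮.w e = 1 := by
    intro e hp
    have h0 := hallzero e (Finset.mem_univ e)
    have h2 : 1 - (u * 𝒮.w e).re = 0 := by
      rcases mul_eq_zero.mp h0 with h | h
      · exact absurd h hp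
      · exact h
    exact eq_one_of_abs_re (habs e) (by linarith)
  obtain ⟨e₀, hk₀, hd₀, hz₀, hp₀⟩ := 𝒮.vac_node
  have hw₀ : 𝒮.w e₀ = 1 := by
    rw [w, hk₀, hd₀, hz₀, 𝒮.G.ω_one, 𝒮.H.ω_one, 𝒮.Q.ω_one]
    norm_num
  have hu : u = 1 := by
    have := hsupp e₀ (ne_of_gt hp₀)
    rwa [hw₀, mul_one] at this
  refine ⟨hu, fun e hp => ?_⟩
  have := hsupp e hp
  rwa [hu, one_mul] at this

section Main

variable (i : I) (α : A)

lemma collapse_ind2 (f : X → ℂ) :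
    (∑ j, ∑ β, ∑ y, (if j = i then (1:ℂ) else 0)
      * (if β = α then (1:ℂ) else 0) * f y * (𝒮.M j β y : ℂ))
    = ∑ y, f y * (𝒮.M i α y : ℂ) := by
  rw [Finset.sum_eq_single i]
  · rw [Finset.sum_eq_single α]
    · refine Finset.sum_congr rfl fun y _ => by simp
    · intro b _ hb
      apply Finset.sum_eq_zero
      intro y _
      simp [hb]
    · intro h; exact absurd (Finset.mem_univ _) h
  · intro b _ hb
    apply Finset.sum_eq_zero; intro β _; apply Finset.sum_eq_zero; intro y _
    simp [hb]
  · intro h; exact absurd (Finset.mem_univ _) h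

lemma ind_sum_G' (kk : I) :
    (∑ j, (if j = i then (1:ℂ) else 0)
      * (𝒮.G.S (𝒮.G.bar j) kk / 𝒮.G.S 𝒮.G.one kk))
    = 𝒮.G.S (𝒮.G.bar i) kk / 𝒮.G.S 𝒮.G.one kk := by
  simp only [ite_mul, one_mul, zero_mul, Finset.sum_ite_eq', Finset.mem_univ, if_true]

lemma ind_sum_H' (dd : A) :
    (∑ β, (if β = α then (1:ℂ) else 0)
      * (𝒮.H.S β dd / 𝒮.H.S 𝒮.H.one dd))
    = 𝒮.H.S α dd / 𝒮.H.S 𝒮.H.one dd := by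
  simp only [ite_mul, one_mul, zero_mul, Finset.sum_ite_eq', Finset.mem_univ, if_true]

lemma ind_sum_X (zz : X) :
    (∑ y, (if y = 𝒮.Q.one then (1:ℂ) else 0)
      * (𝒮.Q.S y zz / 𝒮.Q.S 𝒮.Q.one zz)) = 1 := by
  simp only [ite_mul, one_mul, zero_mul, Finset.sum_ite_eq', Finset.mem_univ, if_true]
  exact div_self (𝒮.Q.sOne_ne_zero zz)

lemma row_sum_X (zz : X) :
    (∑ y, 𝒮.Q.S 𝒮.Q.one y * (𝒮.Q.S y zz / 𝒮.Q.S 𝒮.Q.one zz))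
    = (if zz = 𝒮.Q.one then (1:ℂ) else 0) / 𝒮.Q.S 𝒮.Q.one zz := by
  rw [sum_mul_div, 𝒮.Q.sum_row_one_S]

lemma gauss_sum_X (zz : X) :
    (∑ y, (𝒮.Q.S 𝒮.Q.one y * 𝒮.Q.ω y) * (𝒮.Q.S y zz / 𝒮.Q.S 𝒮.Q.one zz))
    = (𝒮.Q.C ^ 3)⁻¹ * (𝒮.Q.ω zz)⁻¹ := by
  rw [sum_mul_div, 𝒮.Q.gauss_row_one zz, mul_div_cancel_right₀ _ (𝒮.Q.sOne_ne_zero zz)]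

lemma unit_sum_G (kk : I) :
    (∑ j, 𝒮.G.S i j * (𝒮.G.S (𝒮.G.bar j) kk / 𝒮.G.S 𝒮.G.one kk))
    = (if kk = i then (1:ℂ) else 0) / 𝒮.G.S 𝒮.G.one kk := by
  rw [sum_mul_div, 𝒮.G.sum_S_barS i kk]

lemma unit_sum_H (dd : A) :
    (∑ β, star (𝒮.H.S α β) * (𝒮.H.S β dd / 𝒮.H.S 𝒮.H.one dd))
    = (if dd = α then (1:ℂ) else 0) / 𝒮.H.S 𝒮.H.one dd := by
  rw [sum_mul_div, 𝒮.H.sum_starS_S α dd]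

lemma gauss_sum_G (kk : I) :
    (∑ j, (𝒮.G.S i j * 𝒮.G.ω j) * (𝒮.G.S (𝒮.G.bar j) kk / 𝒮.G.S 𝒮.G.one kk))
    = ((𝒮.G.C ^ 3)⁻¹ * ((𝒮.G.ω i)⁻¹ * ((𝒮.G.ω kk)⁻¹ * 𝒮.G.S (𝒮.G.bar i) kk)))
      / 𝒮.G.S 𝒮.G.one kk := by
  rw [sum_mul_div, 𝒮.G.gauss_bar i kk]

lemma gauss_sum_H (dd : A) :
    (∑ β, (star (𝒮.H.S α β) * (𝒮.H.ω β)⁻¹) * (𝒮.H.S β dd / 𝒮.H.S 𝒮.H.one dd))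
    = (𝒮.H.C ^ 3 * (𝒮.H.ω α * (𝒮.H.ω dd * 𝒮.H.S α dd))) / 𝒮.H.S 𝒮.H.one dd := by
  rw [sum_mul_div, 𝒮.H.gauss_star α dd]

/-- the sum `P` of weights over nodes lying over `(i, α)`. -/
noncomputable def Pc : ℂ := ∑ e, if 𝒮.k e = i ∧ 𝒮.δ e = α then (𝒮.p e : ℂ) else 0

/-- the `z = 1` slice sum. -/
noncomputable def Te : ℂ := ∑ e, if 𝒮.ζ e = 𝒮.Q.one then
    ((𝒮.G.S (𝒮.G.bar i) (𝒮.k e) / 𝒮.G.S 𝒮.G.one (𝒮.k e))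
      * (𝒮.H.S α (𝒮.δ e) / 𝒮.H.S 𝒮.H.one (𝒮.δ e)) * (𝒮.p e : ℂ)) else 0

lemma b_val :
    (∑ j, ∑ β, 𝒮.G.S i j * star (𝒮.H.S α β) * (𝒮.M j β 𝒮.Q.one : ℂ))
    = 𝒮.Pc i α / (𝒮.G.S 𝒮.G.one i * 𝒮.H.S 𝒮.H.one α) := by
  have h3 : (∑ j, ∑ β, 𝒮.G.S i j * star (𝒮.H.S α β) * (𝒮.M j β 𝒮.Q.one : ℂ))
      = ∑ j, ∑ β, ∑ y, 𝒮.G.S i j * star (𝒮.H.S α β)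
        * (if y = 𝒮.Q.one then (1:ℂ) else 0) * (𝒮.M j β y : ℂ) := by
    refine Finset.sum_congr rfl fun j _ => Finset.sum_congr rfl fun β _ => ?_
    have hterm : ∀ y : X, 𝒮.G.S i j * star (𝒮.H.S α β)
        * (if y = 𝒮.Q.one then (1:ℂ) else 0) * (𝒮.M j β y : ℂ)
        = if y = 𝒮.Q.one then 𝒮.G.S i j * star (𝒮.H.S α β) * (𝒮.M j β y : ℂ) else 0 := by
      intro y
      by_cases h : y = 𝒮.Q.one
      · rw [if_pos h, if_pos h, mul_one]
      · rw [if_neg h, if_neg h, mul_zero, zero_mul]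
    rw [Finset.sum_congr rfl fun y _ => hterm y,
      Finset.sum_ite_eq' Finset.univ 𝒮.Q.one
        (fun y => 𝒮.G.S i j * star (𝒮.H.S α β) * (𝒮.M j β y : ℂ)),
      if_pos (Finset.mem_univ _)]
  rw [h3, 𝒮.triple_eval (fun j => 𝒮.G.S i j) (fun β => star (𝒮.H.S α β))
    (fun y => if y = 𝒮.Q.one then (1:ℂ) else 0)]
  have hterm : ∀ e : E,
      (∑ j, 𝒮.G.S i j * (𝒮.G.S (𝒮.G.bar j) (𝒮.k e) / 𝒮.G.S 𝒮.G.one (𝒮.k e)))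
      * (∑ β, star (𝒮.H.S α β) * (𝒮.H.S β (𝒮.δ e) / 𝒮.H.S 𝒮.H.one (𝒮.δ e)))
      * (∑ y, (if y = 𝒮.Q.one then (1:ℂ) else 0)
          * (𝒮.Q.S y (𝒮.ζ e) / 𝒮.Q.S 𝒮.Q.one (𝒮.ζ e)))
      * (𝒮.p e : ℂ)
      = (if 𝒮.k e = i ∧ 𝒮.δ e = α then (𝒮.p e : ℂ) else 0)
          / (𝒮.G.S 𝒮.G.one i * 𝒮.H.S 𝒮.H.one α) := by
    intro e
    rw [𝒮.unit_sum_G i (𝒮.k e), 𝒮.unit_sum_H α (𝒮.δ e), 𝒮.ind_sum_X (𝒮.ζ e), mul_one]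
    by_cases hk : 𝒮.k e = i
    · by_cases hd : 𝒮.δ e = α
      · rw [if_pos hk, if_pos hd, if_pos ⟨hk, hd⟩, hk, hd]
        ring
      · rw [if_neg hd, if_neg (by tauto : ¬(𝒮.k e = i ∧ 𝒮.δ e = α))]
        rw [zero_div, mul_zero, zero_mul, zero_div]
    · rw [if_neg hk, if_neg (by tauto : ¬(𝒮.k e = i ∧ 𝒮.δ e = α))]
      rw [zero_div, zero_mul, zero_mul, zero_div]
  rw [Finset.sum_congr rfl fun e _ => hterm e, ← Finset.sum_div, Pc]

lemma tau_val :
    (∑ y, 𝒮.Q.S 𝒮.Q.one y * (𝒮.M i α y : ℂ)) = 𝒮.Te i α / 𝒮.Q.S 𝒮.Q.one 𝒮.Q.one := by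
  rw [← 𝒮.collapse_ind2 i α (fun y => 𝒮.Q.S 𝒮.Q.one y),
    𝒮.triple_eval (fun j => if j = i then (1:ℂ) else 0)
      (fun β => if β = α then (1:ℂ) else 0) (fun y => 𝒮.Q.S 𝒮.Q.one y)]
  have hterm : ∀ e : E,
      (∑ j, (if j = i then (1:ℂ) else 0) * (𝒮.G.S (𝒮.G.bar j) (𝒮.k e) / 𝒮.G.S 𝒮.G.one (𝒮.k e)))
      * (∑ β, (if β = α then (1:ℂ) else 0) * (𝒮.H.S β (𝒮.δ e) / 𝒮.H.S 𝒮.H.one (𝒮.δ e)))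
      * (∑ y, 𝒮.Q.S 𝒮.Q.one y * (𝒮.Q.S y (𝒮.ζ e) / 𝒮.Q.S 𝒮.Q.one (𝒮.ζ e)))
      * (𝒮.p e : ℂ)
      = (if 𝒮.ζ e = 𝒮.Q.one then
          ((𝒮.G.S (𝒮.G.bar i) (𝒮.k e) / 𝒮.G.S 𝒮.G.one (𝒮.k e))
            * (𝒮.H.S α (𝒮.δ e) / 𝒮.H.S 𝒮.H.one (𝒮.δ e)) * (𝒮.p e : ℂ)) else 0)
          / 𝒮.Q.S 𝒮.Q.one 𝒮.Q.one := by
    intro e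
    rw [𝒮.ind_sum_G' i (𝒮.k e), 𝒮.ind_sum_H' α (𝒮.δ e), 𝒮.row_sum_X (𝒮.ζ e)]
    by_cases hz : 𝒮.ζ e = 𝒮.Q.one
    · rw [if_pos hz, if_pos hz, hz]
      ring
    · rw [if_neg hz, if_neg hz]
      simp
  rw [Finset.sum_congr rfl fun e _ => hterm e, ← Finset.sum_div, Te]

/-- first evaluation of the twisted sum `Ψ`. -/
lemma psi_eval1 (hM : ∀ x : X, x ≠ 𝒮.Q.one → 𝒮.M 𝒮.G.one 𝒮.H.one x = 0) :
    (∑ j, ∑ β, ∑ y, 𝒮.G.S i j * star (𝒮.H.S α β)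
      * (𝒮.Q.S 𝒮.Q.one y * 𝒮.Q.ω y) * (𝒮.M j β y : ℂ))
    = (𝒮.Q.C ^ 3)⁻¹ * ((𝒮.G.ω i)⁻¹ * (𝒮.H.ω α
        * (𝒮.Pc i α / (𝒮.G.S 𝒮.G.one i * 𝒮.H.S 𝒮.H.one α)))) := by
  rw [𝒮.triple_eval (fun j => 𝒮.G.S i j) (fun β => star (𝒮.H.S α β))
    (fun y => 𝒮.Q.S 𝒮.Q.one y * 𝒮.Q.ω y)]
  have hterm : ∀ e : E,
      (∑ j, 𝒮.G.S i j * (𝒮.G.S (𝒮.G.bar j) (𝒮.k e) / 𝒮.G.S 𝒮.G.one (𝒮.k e)))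
      * (∑ β, star (𝒮.H.S α β) * (𝒮.H.S β (𝒮.δ e) / 𝒮.H.S 𝒮.H.one (𝒮.δ e)))
      * (∑ y, (𝒮.Q.S 𝒮.Q.one y * 𝒮.Q.ω y) * (𝒮.Q.S y (𝒮.ζ e) / 𝒮.Q.S 𝒮.Q.one (𝒮.ζ e)))
      * (𝒮.p e : ℂ)
      = (𝒮.Q.C ^ 3)⁻¹ * ((𝒮.G.ω i)⁻¹ * (𝒮.H.ω α
          * ((if 𝒮.k e = i ∧ 𝒮.δ e = α then (𝒮.p e : ℂ) else 0)
              / (𝒮.G.S 𝒮.G.one i * 𝒮.H.S 𝒮.H.one α)))) := by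
    intro e
    rw [𝒮.unit_sum_G i (𝒮.k e), 𝒮.unit_sum_H α (𝒮.δ e), 𝒮.gauss_sum_X (𝒮.ζ e)]
    by_cases hk : 𝒮.k e = i
    · by_cases hd : 𝒮.δ e = α
      · rw [if_pos hk, if_pos hd, if_pos ⟨hk, hd⟩]
        by_cases hp : 𝒮.p e = 0
        · rw [hp]
          push_cast
          ring
        · have hw := (𝒮.saturation hM).2 e hp
          rw [w] at hw
          have hinv : (𝒮.Q.ω (𝒮.ζ e))⁻¹ = (𝒮.G.ω (𝒮.k e))⁻¹ * 𝒮.H.ω (𝒮.δ e) := by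
            have h1 := 𝒮.G.omega_ne_zero (𝒮.k e)
            have h2 := 𝒮.H.omega_ne_zero (𝒮.δ e)
            have h3 := 𝒮.Q.omega_ne_zero (𝒮.ζ e)
            field_simp at hw ⊢
            linear_combination hw
          rw [hinv, hk, hd]
          ring
      · rw [if_neg hd, if_neg (by tauto : ¬(𝒮.k e = i ∧ 𝒮.δ e = α))]
        simp
    · rw [if_neg hk, if_neg (by tauto : ¬(𝒮.k e = i ∧ 𝒮.δ e = α))]
      simp
  rw [Finset.sum_congr rfl fun e _ => hterm e]
  rw [← Finset.mul_sum, ← Finset.mul_sum, ← Finset.mul_sum, ← Finset.sum_div, Pc]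

/-- second evaluation of `Ψ` via the phase relation. -/
lemma psi_eval2 (hM : ∀ x : X, x ≠ 𝒮.Q.one → 𝒮.M 𝒮.G.one 𝒮.H.one x = 0) :
    (∑ j, ∑ β, ∑ y, 𝒮.G.S i j * star (𝒮.H.S α β)
      * (𝒮.Q.S 𝒮.Q.one y * 𝒮.Q.ω y) * (𝒮.M j β y : ℂ))
    = ((𝒮.G.C ^ 3)⁻¹ * 𝒮.H.C ^ 3) * ((𝒮.G.ω i)⁻¹ * (𝒮.H.ω α
        * (𝒮.Te i α / 𝒮.Q.S 𝒮.Q.one 𝒮.Q.one))) := by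
  have hphase : (∑ j, ∑ β, ∑ y, 𝒮.G.S i j * star (𝒮.H.S α β)
      * (𝒮.Q.S 𝒮.Q.one y * 𝒮.Q.ω y) * (𝒮.M j β y : ℂ))
      = ∑ j, ∑ β, ∑ y, (𝒮.G.S i j * 𝒮.G.ω j) * (star (𝒮.H.S α β) * (𝒮.H.ω β)⁻¹)
        * (𝒮.Q.S 𝒮.Q.one y) * (𝒮.M j β y : ℂ) := by
    refine Finset.sum_congr rfl fun j _ => Finset.sum_congr rfl fun β _ =>
      Finset.sum_congr rfl fun y _ => ?_
    calc 𝒮.G.S i j * star (𝒮.H.S α β) * (𝒮.Q.S 𝒮.Q.one y * 𝒮.Q.ω y) * (𝒮.M j β y : ℂ)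
        = (𝒮.G.S i j * star (𝒮.H.S α β) * 𝒮.Q.S 𝒮.Q.one y)
          * (𝒮.Q.ω y * (𝒮.M j β y : ℂ)) := by ring
      _ = (𝒮.G.S i j * star (𝒮.H.S α β) * 𝒮.Q.S 𝒮.Q.one y)
          * (𝒮.G.ω j * (𝒮.H.ω β)⁻¹ * (𝒮.M j β y : ℂ)) := by rw [𝒮.phase_term]
      _ = (𝒮.G.S i j * 𝒮.G.ω j) * (star (𝒮.H.S α β) * (𝒮.H.ω β)⁻¹)
          * (𝒮.Q.S 𝒮.Q.one y) * (𝒮.M j β y : ℂ) := by ring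
  rw [hphase, 𝒮.triple_eval (fun j => 𝒮.G.S i j * 𝒮.G.ω j)
    (fun β => star (𝒮.H.S α β) * (𝒮.H.ω β)⁻¹) (fun y => 𝒮.Q.S 𝒮.Q.one y)]
  have hterm : ∀ e : E,
      (∑ j, (𝒮.G.S i j * 𝒮.G.ω j) * (𝒮.G.S (𝒮.G.bar j) (𝒮.k e) / 𝒮.G.S 𝒮.G.one (𝒮.k e)))
      * (∑ β, (star (𝒮.H.S α β) * (𝒮.H.ω β)⁻¹) * (𝒮.H.S β (𝒮.δ e) / 𝒮.H.S 𝒮.H.one (𝒮.δ e)))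
      * (∑ y, 𝒮.Q.S 𝒮.Q.one y * (𝒮.Q.S y (𝒮.ζ e) / 𝒮.Q.S 𝒮.Q.one (𝒮.ζ e)))
      * (𝒮.p e : ℂ)
      = ((𝒮.G.C ^ 3)⁻¹ * 𝒮.H.C ^ 3) * ((𝒮.G.ω i)⁻¹ * (𝒮.H.ω α
          * ((if 𝒮.ζ e = 𝒮.Q.one then
              ((𝒮.G.S (𝒮.G.bar i) (𝒮.k e) / 𝒮.G.S 𝒮.G.one (𝒮.k e))
                * (𝒮.H.S α (𝒮.δ e) / 𝒮.H.S 𝒮.H.one (𝒮.δ e)) * (𝒮.p e : ℂ)) else 0)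
              / 𝒮.Q.S 𝒮.Q.one 𝒮.Q.one))) := by
    intro e
    rw [𝒮.gauss_sum_G i (𝒮.k e), 𝒮.gauss_sum_H α (𝒮.δ e), 𝒮.row_sum_X (𝒮.ζ e)]
    by_cases hz : 𝒮.ζ e = 𝒮.Q.one
    · rw [if_pos hz, if_pos hz, hz]
      by_cases hp : 𝒮.p e = 0
      · rw [hp]
        push_cast
        ring
      · have hw := (𝒮.saturation hM).2 e hp
        rw [w, hz, 𝒮.Q.ω_one, inv_one, mul_one] at hw
        have hunit : (𝒮.G.ω (𝒮.k e))⁻¹ * 𝒮.H.ω (𝒮.δ e) = 1 := by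
          have h1 := 𝒮.G.omega_ne_zero (𝒮.k e)
          have h2 := 𝒮.H.omega_ne_zero (𝒮.δ e)
          field_simp at hw ⊢
          linear_combination -hw
        calc ((𝒮.G.C ^ 3)⁻¹ * ((𝒮.G.ω i)⁻¹ * ((𝒮.G.ω (𝒮.k e))⁻¹
                * 𝒮.G.S (𝒮.G.bar i) (𝒮.k e))) / 𝒮.G.S 𝒮.G.one (𝒮.k e))
            * (𝒮.H.C ^ 3 * (𝒮.H.ω α * (𝒮.H.ω (𝒮.δ e) * 𝒮.H.S α (𝒮.δ e)))
                / 𝒮.H.S 𝒮.H.one (𝒮.δ e))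
            * ((1:ℂ) / 𝒮.Q.S 𝒮.Q.one 𝒮.Q.one) * (𝒮.p e : ℂ)
            = ((𝒮.G.ω (𝒮.k e))⁻¹ * 𝒮.H.ω (𝒮.δ e))
              * (((𝒮.G.C ^ 3)⁻¹ * 𝒮.H.C ^ 3) * ((𝒮.G.ω i)⁻¹ * (𝒮.H.ω α
                * (((𝒮.G.S (𝒮.G.bar i) (𝒮.k e) / 𝒮.G.S 𝒮.G.one (𝒮.k e))
                    * (𝒮.H.S α (𝒮.δ e) / 𝒮.H.S 𝒮.H.one (𝒮.δ e)) * (𝒮.p e : ℂ))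
                  / 𝒮.Q.S 𝒮.Q.one 𝒮.Q.one)))) := by ring
          _ = _ := by rw [hunit, one_mul]
    · rw [if_neg hz, if_neg hz]
      simp
  rw [Finset.sum_congr rfl fun e _ => hterm e]
  rw [← Finset.mul_sum, ← Finset.mul_sum, ← Finset.mul_sum, ← Finset.sum_div, Te]

/-- Main identity: `b₀(i,α) = ∑_y S̈₁y M(i,α,y)`. -/
lemma b_eq_tau (hM : ∀ x : X, x ≠ 𝒮.Q.one → 𝒮.M 𝒮.G.one 𝒮.H.one x = 0) :
    (∑ j, ∑ β, 𝒮.G.S i j * star (𝒮.H.S α β) * (𝒮.M j β 𝒮.Q.one : ℂ))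
    = ∑ y, 𝒮.Q.S 𝒮.Q.one y * (𝒮.M i α y : ℂ) := by
  have hCC : (𝒮.G.C ^ 3)⁻¹ * 𝒮.H.C ^ 3 = (𝒮.Q.C ^ 3)⁻¹ := by
    have hu := (𝒮.saturation hM).1
    have h1 := 𝒮.G.C3_ne_zero
    have h2 := 𝒮.H.C3_ne_zero
    have h3 := 𝒮.Q.C3_ne_zero
    field_simp at hu
    rw [div_eq_one_iff_eq (mul_ne_zero h2 h3)] at hu
    rw [hu, mul_inv, mul_comm (𝒮.H.C ^ 3)⁻¹, mul_assoc, inv_mul_cancel₀ h2, mul_one]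
  have h := (𝒮.psi_eval1 i α hM).symm.trans (𝒮.psi_eval2 i α hM)
  rw [hCC] at h
  have hQ3 : ((𝒮.Q.C ^ 3)⁻¹ : ℂ) ≠ 0 := inv_ne_zero 𝒮.Q.C3_ne_zero
  have hωi : (𝒮.G.ω i)⁻¹ ≠ 0 := inv_ne_zero (𝒮.G.omega_ne_zero i)
  have hωα : 𝒮.H.ω α ≠ 0 := 𝒮.H.omega_ne_zero α
  have h2 := mul_left_cancel₀ hQ3 h
  have h3 := mul_left_cancel₀ hωi h2
  have h4 := mul_left_cancel₀ hωα h3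
  rw [𝒮.b_val i α, 𝒮.tau_val i α, h4]

end Main

end CosetSpectralSystem


/-- The Kac–Wakimoto conjecture (Corollary 3.5) in abstract form: if
`M(1,1,x) = 0` for `x ≠ 1` and `M(i,α,x) > 0` for some `x`, then
`b⁰(i,α) = Σ_{j,β} S_{ij} conj(Ṡ_{αβ}) M(j,β,1)` is a strictly positive real number. -/
theorem cosetSpectralSystem_kac_wakimoto {I A X E : Type*}
    [Fintype I] [DecidableEq I] [Fintype A] [DecidableEq A]
    [Fintype X] [DecidableEq X] [Fintype E]
    (𝒮 : CosetSpectralSystem I A X E)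
    (hM : ∀ x : X, x ≠ 𝒮.Q.one → 𝒮.M 𝒮.G.one 𝒮.H.one x = 0)
    (b₀ : I → A → ℂ)
    (hb₀ : ∀ i α, b₀ i α
      = ∑ j, ∑ β, 𝒮.G.S i j * star (𝒮.H.S α β) * (𝒮.M j β 𝒮.Q.one : ℂ))
    (i : I) (α : A) (hx : ∃ x : X, 0 < 𝒮.M i α x) :
    ∃ r : ℝ, 0 < r ∧ b₀ i α = (r : ℂ) := by
  obtain ⟨x₀, hx₀⟩ := hx
  refine ⟨∑ y, (𝒮.Q.S 𝒮.Q.one y).re * 𝒮.M i α y, ?_, ?_⟩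
  · refine Finset.sum_pos' (fun y _ => mul_nonneg (le_of_lt (𝒮.Q.S_one_pos y))
      (𝒮.M_nonneg i α y)) ⟨x₀, Finset.mem_univ x₀, mul_pos (𝒮.Q.S_one_pos x₀) hx₀⟩
  · rw [hb₀ i α, 𝒮.b_eq_tau i α hM]
    push_cast
    refine Finset.sum_congr rfl fun y _ => ?_
    congr 1
    exact (Complex.ext (by simp) (by simp [𝒮.Q.S_one_im y])).symm
end

section
/- Let (I, S, ω, C) and (A, Ṡ, ω̇, Ċ) be modular data, and let b : I × A → ℝ be a function with b(i, α) ≥ 0 for all arguments and b(1, 1) = 1. Let E be a finite index set with maps k : E → I, d : E → A and weights p : E → ℝ with p(e) ≥ 0, and assume: (a) b(i, α) = Σ_{e∈E} (S_{ī, k(e)}/S_{1, k(e)}) · (Ṡ_{α, d(e)}/Ṡ_{1, d(e)}) · p(e) for all (i, α) ∈ I × A; (b) there exists e₀ ∈ E with k(e₀) = 1, d(e₀) = 1 and p(e₀) > 0; (c) whenever b(j, β) ≠ 0 one has ω_j = ω̇_β; (d) Σ_{j∈I} Σ_{β∈A} S_{1j} · conj(Ṡ_{1β}) · b(j, β) =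 1. Then C³ = Ċ³, and b(i, α) = Σ_{j∈I} Σ_{β∈A} S_{ij} · conj(Ṡ_{αβ}) · b(j, β) for all (i, α) ∈ I × A. -/
open scoped BigOperators

lemma abs_one_re_one {z : ℂ} (h1 : ‖z‖ = 1) (h2 : z.re = 1) : z = 1 := by
  have hn : Complex.normSq z = 1 := by
    rw [← Complex.sq_norm, h1]; norm_num
  have : z.im ^ 2 = 0 := by
    have := Complex.normSq_apply z
    nlinarith [this]
  have him : z.im = 0 := by nlinarith [this]
  exact Complex.ext h2 him

lemma phase_align {ι : Type*} [Fintype ι] (u : ι → ℂ) (q : ι → ℝ) (w : ℂ)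
    (hu : ∀ t, ‖u t‖ = 1) (hq : ∀ t, 0 ≤ q t) (hsum : ∑ t, q t = 1)
    (heq : ∑ t, (q t : ℂ) * u t = w) (hw : ‖w‖ = 1) :
    ∀ t, 0 < q t → u t = w := by
  have hw0 : w ≠ 0 := by
    intro h; rw [h] at hw; simp at hw
  have hinv : ∑ t, (q t : ℂ) * (u t * w⁻¹) = 1 := by
    have := congrArg (fun z => z * w⁻¹) heq
    simp only [Finset.sum_mul] at this
    rw [mul_inv_cancel₀ hw0] at this
    simpa [mul_assoc] using this
  have habs : ∀ t, ‖u t * w⁻¹‖ = 1 := by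
    intro t; rw [norm_mul, norm_inv, hu, hw]; norm_num
  have hre : ∑ t, q t * (u t * w⁻¹).re = 1 := by
    have := congrArg Complex.re hinv
    simpa [Complex.re_sum, Complex.re_ofReal_mul] using this
  have hzero : ∑ t, q t * (1 - (u t * w⁻¹).re) = 0 := by
    simp only [mul_sub, mul_one, Finset.sum_sub_distrib, hsum, hre, sub_self]
  have hterm : ∀ t ∈ Finset.univ, q t * (1 - (u t * w⁻¹).re) = 0 := by
    rw [← Finset.sum_eq_zero_iff_of_nonneg] ; exact hzero
    intro t _
    have : (u t * w⁻¹).re ≤ 1 := by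
      calc (u t * w⁻¹).re ≤ ‖u t * w⁻¹‖ := Complex.re_le_norm _
        _ = 1 := habs t
    have := hq t; nlinarith
  intro t ht
  have h0 := hterm t (Finset.mem_univ t)
  have : (u t * w⁻¹).re = 1 := by
    rcases mul_eq_zero.mp h0 with h | h
    · exact absurd h (ne_of_gt ht)
    · linarith
  have := abs_one_re_one (habs t) this
  calc u t = u t * w⁻¹ * w := by field_simp
    _ = w := by rw [this, one_mul]

namespace ModularDatum

variable {I : Type*} [Fintype I] [DecidableEq I] (G : ModularDatum I)

lemma Sone_ne (i : I) : G.S G.one i ≠ 0 := by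
  intro h
  have := G.S_one_pos i
  rw [h] at this; simp at this

lemma Sone_conj (i : I) : (starRingEnd ℂ) (G.S G.one i) = G.S G.one i := by
  rw [Complex.conj_eq_iff_im]; exact G.S_one_im i

lemma omega_ne (i : I) : G.ω i ≠ 0 := by
  intro h
  have := G.ω_abs i; rw [h] at this; simp at this

lemma C_ne : G.C ≠ 0 := by
  intro h; have := G.C_abs; rw [h] at this; simp at this

lemma S4 : G.S ^ 2 * G.S ^ 2 = 1 := by
  ext i k
  rw [Matrix.mul_apply]
  simp only [G.rel_Ssq, Matrix.one_apply]
  rw [Finset.sum_eq_single (G.bar i)]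
  · simp [G.bar_invol i, eq_comm]
  · intro m _ hm; simp [hm]
  · intro h; exact absurd (Finset.mem_univ _) h

lemma row_orth (i k : I) : ∑ j, G.S i j * G.S (G.bar j) k = if i = k then 1 else 0 := by
  have hbar : ∀ j, G.S (G.bar j) k = (G.S ^ 2 * G.S) j k := by
    intro j
    rw [Matrix.mul_apply]
    rw [Finset.sum_eq_single (G.bar j)]
    · simp [G.rel_Ssq]
    · intro m _ hm; simp [G.rel_Ssq, hm]
    · intro h; exact absurd (Finset.mem_univ _) h
  calc ∑ j, G.S i j * G.S (G.bar j) k = ∑ j, G.S i j * (G.S ^ 2 * G.S) j k := by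
        simp only [hbar]
    _ = (G.S * (G.S ^ 2 * G.S)) i k := (Matrix.mul_apply).symm
    _ = (G.S ^ 2 * G.S ^ 2) i k := by
        congr 1
        rw [← pow_succ, ← pow_succ', ← pow_add]
    _ = (1 : Matrix I I ℂ) i k := by rw [G.S4]
    _ = if i = k then 1 else 0 := Matrix.one_apply

lemma STS : G.S * Matrix.diagonal G.ω * G.S
    = G.C⁻¹ ^ 3 • (Matrix.diagonal (fun i => (G.ω i)⁻¹) * G.S * Matrix.diagonal (fun i => (G.ω i)⁻¹)) := by
  set T : Matrix I I ℂ := Matrix.diagonal (fun i => G.C * G.ω i) with hT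
  set Ti : Matrix I I ℂ := Matrix.diagonal (fun i => (G.C * G.ω i)⁻¹) with hTi
  have hCω : ∀ i, G.C * G.ω i ≠ 0 := fun i => mul_ne_zero G.C_ne (G.omega_ne i)
  have hTTi : T * Ti = 1 := by
    rw [hT, hTi, Matrix.diagonal_mul_diagonal]
    rw [show (fun i => (G.C * G.ω i) * (G.C * G.ω i)⁻¹) = fun _ : I => (1:ℂ) from
      funext fun i => mul_inv_cancel₀ (hCω i)]
    exact Matrix.diagonal_one
  have hTiT : Ti * T = 1 := by
    rw [hT, hTi, Matrix.diagonal_mul_diagonal]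
    rw [show (fun i => (G.C * G.ω i)⁻¹ * (G.C * G.ω i)) = fun _ : I => (1:ℂ) from
      funext fun i => inv_mul_cancel₀ (hCω i)]
    exact Matrix.diagonal_one
  have hsS : star G.S * G.S = 1 := Matrix.mem_unitaryGroup_iff'.mp G.S_unitary
  have h3 : G.S * T * (G.S * T) * (G.S * T) = G.S * G.S := by
    have := G.rel_STS
    rw [pow_succ, pow_succ, pow_one, sq] at this
    exact this
  have e1 : T * G.S * T * G.S * T = G.S := by
    have h := congrArg (fun M => star G.S * M) h3
    simp only [← Matrix.mul_assoc] at h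
    rwa [hsS, one_mul, one_mul] at h
  have e2 : G.S * T * G.S * T = Ti * G.S := by
    have h := congrArg (fun M => Ti * M) e1
    simp only [← Matrix.mul_assoc] at h
    rwa [hTiT, one_mul] at h
  have e3 : G.S * T * G.S = Ti * G.S * Ti := by
    have h := congrArg (fun M => M * Ti) e2
    rwa [Matrix.mul_assoc (G.S * T * G.S) T Ti, hTTi, Matrix.mul_one] at h
  have hTs : T = G.C • Matrix.diagonal G.ω := by
    rw [hT, show (fun i => G.C * G.ω i) = (G.C • G.ω) from funext fun i => by simp,
      Matrix.diagonal_smul]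
  have hTis : Ti = G.C⁻¹ • Matrix.diagonal (fun i => (G.ω i)⁻¹) := by
    rw [hTi, show (fun i => (G.C * G.ω i)⁻¹) = (G.C⁻¹ • fun i => (G.ω i)⁻¹) from
      funext fun i => by rw [mul_inv]; simp, Matrix.diagonal_smul]
  rw [hTs, hTis] at e3
  simp only [Matrix.mul_smul, Matrix.smul_mul, smul_smul] at e3
  have h := congrArg (fun M => G.C⁻¹ • M) e3
  simp only [smul_smul] at h
  rw [inv_mul_cancel₀ G.C_ne, one_smul] at h
  rw [h]
  congr 1
  ring

lemma diag_omega_star : star (Matrix.diagonal G.ω) = Matrix.diagonal (fun i => (G.ω i)⁻¹) := by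
  rw [Matrix.star_eq_conjTranspose, Matrix.diagonal_conjTranspose,
    show (star G.ω) = (fun i => (G.ω i)⁻¹) from
      funext fun i => by rw [Pi.star_apply, show star (G.ω i) = starRingEnd ℂ (G.ω i) from rfl, ← Complex.inv_eq_conj (G.ω_abs i)]]

lemma diag_omega_inv_star :
    star (Matrix.diagonal (fun i => (G.ω i)⁻¹)) = Matrix.diagonal G.ω := by
  rw [Matrix.star_eq_conjTranspose, Matrix.diagonal_conjTranspose,
    show (star fun i => (G.ω i)⁻¹) = G.ω from funext fun i => by
      rw [Pi.star_apply, show star (G.ω i)⁻¹ = starRingEnd ℂ (G.ω i)⁻¹ from rfl,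
        ← Complex.inv_eq_conj (by rw [norm_inv, G.ω_abs]; exact inv_one :
        ‖(G.ω i)⁻¹‖ = 1), inv_inv]]

lemma STS_star : star G.S * Matrix.diagonal (fun i => (G.ω i)⁻¹) * star G.S
    = G.C ^ 3 • (Matrix.diagonal G.ω * star G.S * Matrix.diagonal G.ω) := by
  have h := congrArg star G.STS
  simp only [star_smul, star_mul, ← Matrix.mul_assoc] at h
  rw [G.diag_omega_star, G.diag_omega_inv_star] at h
  have hcc : star (G.C⁻¹ ^ 3) = G.C ^ 3 := by
    rw [show star (G.C⁻¹ ^ 3) = starRingEnd ℂ (G.C⁻¹ ^ 3) from rfl, map_pow, map_inv₀,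
      ← Complex.inv_eq_conj G.C_abs, inv_inv]
  rw [hcc] at h
  exact h

end ModularDatum


/-- The remark after Proposition 3.1: for branching coefficients `b` of a
conformal inclusion satisfying the spectral decomposition (a), the vacuum node (b), the
phase condition (c) and the normalization (d), one has `C³ = Ċ³` and
`b(i,α) = Σ_{j,β} S_{ij} conj(Ṡ_{αβ}) b(j,β)`. -/
theorem conformal_inclusion_branching_modular {I A E : Type*}
    [Fintype I] [DecidableEq I] [Fintype A] [DecidableEq A] [Fintype E]
    (G : ModularDatum I) (H : ModularDatum A)
    (b : I → A → ℝ) (hb : ∀ i α, 0 ≤ b i α) (hb1 : b G.one H.one = 1)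
    (k : E → I) (d : E → A) (p : E → ℝ) (hp : ∀ e, 0 ≤ p e)
    (ha : ∀ i α, (b i α : ℂ) =
      ∑ e, (G.S (G.bar i) (k e) / G.S G.one (k e)) *
           (H.S α (d e) / H.S H.one (d e)) * (p e : ℂ))
    (hvac : ∃ e₀, k e₀ = G.one ∧ d e₀ = H.one ∧ 0 < p e₀)
    (hph : ∀ j β, b j β ≠ 0 → G.ω j = H.ω β)
    (hnorm : ∑ j, ∑ β, G.S G.one j * star (H.S H.one β) * (b j β : ℂ) = 1) :
    G.C ^ 3 = H.C ^ 3 ∧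
    ∀ i α, (b i α : ℂ) = ∑ j, ∑ β, G.S i j * star (H.S α β) * (b j β : ℂ) := by
  classical
  obtain ⟨e₀, hk0, hd0, hp0⟩ := hvac
  have hSg1 : ∀ x, G.S G.one x ≠ 0 := G.Sone_ne
  have hSh1 : ∀ x, H.S H.one x ≠ 0 := H.Sone_ne
  have hsSg : star G.S * G.S = 1 := Matrix.mem_unitaryGroup_iff'.mp G.S_unitary
  have hsSh : star H.S * H.S = 1 := Matrix.mem_unitaryGroup_iff'.mp H.S_unitary
  set B : Matrix I A ℂ := Matrix.of (fun i α => ((b i α : ℝ) : ℂ)) with hBdef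
  have hBa : ∀ i α, B i α = ((b i α : ℝ) : ℂ) := fun i α => rfl
  set c : Matrix I A ℂ := G.S * B * star H.S with hcdef
  set Og : Matrix I I ℂ := Matrix.diagonal G.ω with hOgdef
  set Ogi : Matrix I I ℂ := Matrix.diagonal (fun i => (G.ω i)⁻¹) with hOgidef
  set Oh : Matrix A A ℂ := Matrix.diagonal H.ω with hOhdef
  set Ohi : Matrix A A ℂ := Matrix.diagonal (fun α => (H.ω α)⁻¹) with hOhidef
  have hOgiOg : Ogi * Og = 1 := by
    rw [hOgidef, hOgdef, Matrix.diagonal_mul_diagonal,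
      show (fun i => (G.ω i)⁻¹ * G.ω i) = fun _ : I => (1:ℂ) from
        funext fun i => inv_mul_cancel₀ (G.omega_ne i)]
    exact Matrix.diagonal_one
  have hOhiOh : Ohi * Oh = 1 := by
    rw [hOhidef, hOhdef, Matrix.diagonal_mul_diagonal,
      show (fun α => (H.ω α)⁻¹ * H.ω α) = fun _ : A => (1:ℂ) from
        funext fun α => inv_mul_cancel₀ (H.omega_ne α)]
    exact Matrix.diagonal_one
  have hmul3 : ∀ (M : Matrix I A ℂ) i α,
      (G.S * M * star H.S) i α = ∑ j, ∑ β, G.S i j * M j β * star (H.S α β) := by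
    intro M i α
    have hstep : ∀ x, (G.S * M) i x * (star H.S) x α
        = ∑ j, G.S i j * M j x * (star H.S) x α := by
      intro x
      rw [Matrix.mul_apply, Finset.sum_mul]
    rw [Matrix.mul_apply]
    rw [Finset.sum_congr rfl fun x (_ : x ∈ Finset.univ) => hstep x]
    rw [Finset.sum_comm]
    refine Finset.sum_congr rfl fun j _ => Finset.sum_congr rfl fun β _ => ?_
    rw [Matrix.star_apply]
  have hcol : ∀ α δ, (∑ β, star (H.S α β) * H.S β δ) = if α = δ then (1:ℂ) else 0 := by
    intro α δ
    calc (∑ β, star (H.S α β) * H.S β δ) = ∑ β, (star H.S) α β * H.S β δ :=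
          Finset.sum_congr rfl fun β _ => by rw [Matrix.star_apply, H.S_symm α β]
      _ = (star H.S * H.S) α δ := (Matrix.mul_apply).symm
      _ = (1 : Matrix A A ℂ) α δ := by rw [hsSh]
      _ = if α = δ then 1 else 0 := Matrix.one_apply
  set q : I → A → ℝ := fun i α => ∑ e, if k e = i ∧ d e = α then p e else 0 with hqdef
  have hq_nonneg : ∀ i α, 0 ≤ q i α := by
    intro i α
    simp only [hqdef]
    refine Finset.sum_nonneg fun e _ => ?_
    split
    · exact hp e
    · exact le_refl 0
  have hq11 : 0 < q G.one H.one := by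
    have h := Finset.single_le_sum
      (f := fun e => if k e = G.one ∧ d e = H.one then p e else 0)
      (fun e _ => by split; exacts [hp e, le_refl 0]) (Finset.mem_univ e₀)
    rw [if_pos ⟨hk0, hd0⟩] at h
    simp only [hqdef]
    exact lt_of_lt_of_le hp0 h
  have hqcast : ∀ i α, ((q i α : ℝ) : ℂ)
      = ∑ e, if k e = i ∧ d e = α then ((p e : ℝ) : ℂ) else 0 := by
    intro i α
    simp only [hqdef]
    push_cast
    refine Finset.sum_congr rfl fun e _ => ?_
    split <;> simp
  have hc : ∀ i α, c i α = ((q i α : ℝ) : ℂ) / (G.S G.one i * H.S H.one α) := by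
    intro i α
    rw [hcdef, hmul3]
    have h1 : ∀ j β, G.S i j * B j β * star (H.S α β)
        = ∑ e, (G.S i j * G.S (G.bar j) (k e)) * (star (H.S α β) * H.S β (d e))
            * ((p e : ℂ) / (G.S G.one (k e) * H.S H.one (d e))) := by
      intro j β
      rw [hBa, ha j β, Finset.mul_sum, Finset.sum_mul]
      refine Finset.sum_congr rfl fun e _ => ?_
      simp only [div_eq_mul_inv, mul_inv]
      ring
    simp only [h1]
    rw [show (∑ j, ∑ β, ∑ e, (G.S i j * G.S (G.bar j) (k e)) * (star (H.S α β) * H.S β (d e))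
            * ((p e : ℂ) / (G.S G.one (k e) * H.S H.one (d e))))
        = ∑ e, ∑ j, ∑ β, (G.S i j * G.S (G.bar j) (k e)) * (star (H.S α β) * H.S β (d e))
            * ((p e : ℂ) / (G.S G.one (k e) * H.S H.one (d e))) from by
      rw [Finset.sum_congr rfl fun j (_ : j ∈ Finset.univ) => Finset.sum_comm]
      exact Finset.sum_comm]
    have h2 : ∀ e, (∑ j, ∑ β, (G.S i j * G.S (G.bar j) (k e)) * (star (H.S α β) * H.S β (d e))
            * ((p e : ℂ) / (G.S G.one (k e) * H.S H.one (d e))))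
        = (if k e = i ∧ d e = α then ((p e : ℝ) : ℂ) else 0) / (G.S G.one i * H.S H.one α) := by
      intro e
      have hfac : (∑ j, ∑ β, (G.S i j * G.S (G.bar j) (k e)) * (star (H.S α β) * H.S β (d e))
            * ((p e : ℂ) / (G.S G.one (k e) * H.S H.one (d e))))
          = (∑ j, G.S i j * G.S (G.bar j) (k e)) * (∑ β, star (H.S α β) * H.S β (d e))
            * ((p e : ℂ) / (G.S G.one (k e) * H.S H.one (d e))) := by
        rw [Finset.sum_mul_sum, Finset.sum_mul]
        refine Finset.sum_congr rfl fun j _ => ?_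
        rw [Finset.sum_mul]
      rw [hfac, G.row_orth, hcol]
      by_cases h1' : i = k e
      · by_cases h2' : α = d e
        · rw [if_pos h1', if_pos h2', if_pos ⟨h1'.symm, h2'.symm⟩, ← h1', ← h2', one_mul, one_mul]
        · rw [if_pos h1', if_neg h2', if_neg (show ¬(k e = i ∧ d e = α) from fun hx => h2' hx.2.symm)]
          simp
      · rw [if_neg h1', if_neg (show ¬(k e = i ∧ d e = α) from fun hx => h1' hx.1.symm)]
        simp
    simp only [h2]
    rw [← Finset.sum_div, ← hqcast]
  have hpsum : (∑ e, p e) = 1 := by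
    have h := ha G.one H.one
    rw [hb1, G.bar_one] at h
    have h2 : ∀ e, G.S G.one (k e) / G.S G.one (k e) * (H.S H.one (d e) / H.S H.one (d e))
        * (p e : ℂ) = (p e : ℂ) := by
      intro e
      rw [div_self (hSg1 (k e)), div_self (hSh1 (d e)), one_mul, one_mul]
    rw [Finset.sum_congr rfl fun e _ => h2 e] at h
    exact_mod_cast h.symm
  have hqsum : (∑ j, ∑ β, q j β) = 1 := by
    have hswap : (∑ j, ∑ β, q j β)
        = ∑ e, ∑ j, ∑ β, (if k e = j ∧ d e = β then p e else 0) := by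
      simp only [hqdef]
      rw [Finset.sum_congr rfl fun j (_ : j ∈ Finset.univ) => Finset.sum_comm]
      exact Finset.sum_comm
    rw [hswap, Finset.sum_congr rfl fun e (_ : e ∈ Finset.univ) =>
      (by
        rw [Finset.sum_eq_single (k e)]
        · rw [Finset.sum_eq_single (d e)]
          · rw [if_pos ⟨rfl, rfl⟩]
          · intro β _ hβ
            rw [if_neg (by rintro ⟨-, h⟩; exact hβ h.symm)]
          · intro h; exact absurd (Finset.mem_univ _) h
        · intro j _ hj
          refine Finset.sum_eq_zero fun β _ => ?_
          rw [if_neg (by rintro ⟨h, -⟩; exact hj h.symm)]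
        · intro h; exact absurd (Finset.mem_univ _) h :
        (∑ j, ∑ β, (if k e = j ∧ d e = β then p e else 0)) = p e)]
    exact hpsum
  have hc11 : c G.one H.one = 1 := by
    rw [hcdef, hmul3, ← hnorm]
    refine Finset.sum_congr rfl fun j _ => Finset.sum_congr rfl fun β _ => ?_
    rw [hBa]
    ring
  have hBO : Og * B = B * Oh := by
    ext j β
    rw [hOgdef, hOhdef, Matrix.diagonal_mul, Matrix.mul_diagonal, hBa]
    by_cases h : b j β = 0
    · rw [h]; simp
    · rw [hph j β h]; ring
  have hBO' : Ogi * B * Oh = B := by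
    rw [Matrix.mul_assoc, ← hBO, ← Matrix.mul_assoc, hOgiOg, Matrix.one_mul]
  have hkey : G.S * (Og * c * Ohi) * star H.S = (H.C ^ 3 * G.C⁻¹ ^ 3) • (Ogi * c * Oh) := by
    have expand : G.S * (Og * c * Ohi) * star H.S
        = (G.S * Og * G.S) * B * (star H.S * Ohi * star H.S) := by
      rw [hcdef]; simp only [Matrix.mul_assoc]
    have hmid : (Ogi * G.S * Ogi) * B * (Oh * star H.S * Oh) = Ogi * c * Oh := by
      rw [hcdef]
      calc (Ogi * G.S * Ogi) * B * (Oh * star H.S * Oh)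
          = Ogi * G.S * (Ogi * B * Oh) * star H.S * Oh := by
            simp only [Matrix.mul_assoc]
        _ = Ogi * (G.S * B * star H.S) * Oh := by
            rw [hBO']; simp only [Matrix.mul_assoc]
    rw [expand, hOgdef, hOhidef, G.STS, H.STS_star, ← hOgidef, ← hOhdef]
    simp only [Matrix.smul_mul, Matrix.mul_smul, smul_smul]
    rw [hmid]
    try congr 1
    try ring
  have hOcO : ∀ (M : Matrix I A ℂ) j β, (Og * M * Ohi) j β = G.ω j * M j β * (H.ω β)⁻¹ := by
    intro M j β
    rw [hOgdef, hOhidef, Matrix.mul_diagonal, Matrix.diagonal_mul]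
  have hOcO' : ∀ (M : Matrix I A ℂ) j β, (Ogi * M * Oh) j β = (G.ω j)⁻¹ * M j β * H.ω β := by
    intro M j β
    rw [hOgidef, hOhdef, Matrix.mul_diagonal, Matrix.diagonal_mul]
  have hstar1 : ∀ β, star (H.S H.one β) = H.S H.one β := fun β => H.Sone_conj β
  have hkey11 : (∑ j, ∑ β, (G.ω j * (H.ω β)⁻¹) * ((q j β : ℝ) : ℂ))
      = H.C ^ 3 * G.C⁻¹ ^ 3 := by
    have h : (G.S * (Og * c * Ohi) * star H.S) G.one H.one
        = ((H.C ^ 3 * G.C⁻¹ ^ 3) • (Ogi * c * Oh)) G.one H.one := by rw [hkey]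
    rw [hmul3] at h
    have hterm : ∀ j β, G.S G.one j * (Og * c * Ohi) j β * star (H.S H.one β)
        = (G.ω j * (H.ω β)⁻¹) * ((q j β : ℝ) : ℂ) := by
      intro j β
      rw [hOcO, hc j β, hstar1]
      field_simp [hSg1 j, hSh1 β, H.omega_ne β]
      try ring
    rw [Finset.sum_congr rfl fun j (_ : j ∈ Finset.univ) =>
      Finset.sum_congr rfl fun β (_ : β ∈ Finset.univ) => hterm j β] at h
    rw [h, Matrix.smul_apply, hOcO', hc11, G.ω_one, H.ω_one, smul_eq_mul]
    norm_num
  have hw_abs : ‖H.C ^ 3 * G.C⁻¹ ^ 3‖ = 1 := by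
    rw [norm_mul, norm_pow, norm_pow, norm_inv, H.C_abs, G.C_abs]
    norm_num
  have halign := phase_align (fun x : I × A => G.ω x.1 * (H.ω x.2)⁻¹) (fun x => q x.1 x.2)
    (H.C ^ 3 * G.C⁻¹ ^ 3)
    (fun x => by rw [norm_mul, norm_inv, G.ω_abs, H.ω_abs]; norm_num)
    (fun x => hq_nonneg x.1 x.2)
    (by rw [Fintype.sum_prod_type]; exact hqsum)
    (by rw [Fintype.sum_prod_type, ← hkey11]
        exact Finset.sum_congr rfl fun j _ => Finset.sum_congr rfl fun β _ => by ring)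
    hw_abs
  have hw1 : H.C ^ 3 * G.C⁻¹ ^ 3 = 1 := by
    have h := halign (G.one, H.one) hq11
    simp only [G.ω_one, H.ω_one] at h
    rw [← h]
    norm_num
  have goal1 : G.C ^ 3 = H.C ^ 3 := by
    rw [inv_pow] at hw1
    exact ((mul_inv_eq_one₀ (pow_ne_zero 3 G.C_ne)).mp hw1).symm
  have halign' : ∀ j β, q j β ≠ 0 → G.ω j = H.ω β := by
    intro j β h0
    have hpos : 0 < q j β := lt_of_le_of_ne (hq_nonneg j β) (Ne.symm h0)
    have h := halign (j, β) hpos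
    simp only at h
    rw [hw1] at h
    have h2 := congrArg (fun z => z * H.ω β) h
    simp only [one_mul] at h2
    rwa [mul_assoc, inv_mul_cancel₀ (H.omega_ne β), mul_one] at h2
  have hOc : Og * c * Ohi = c := by
    ext j β
    rw [hOcO c j β]
    by_cases h0 : q j β = 0
    · rw [hc j β, h0]
      simp
    · rw [halign' j β h0, mul_comm (H.ω β) (c j β), mul_assoc,
        mul_inv_cancel₀ (H.omega_ne β), mul_one]
  have hOc' : Ogi * c * Oh = c := by
    have h5 : Ogi * (Og * c * Ohi) * Oh = c := by
      simp only [Matrix.mul_assoc]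
      rw [hOhiOh, Matrix.mul_one, ← Matrix.mul_assoc, hOgiOg, Matrix.one_mul]
    rw [hOc] at h5
    exact h5
  have hfix : G.S * c * star H.S = c := by
    have h := hkey
    rw [hOc, hOc', hw1, one_smul] at h
    exact h
  have hfinal : G.S * B * star H.S = B := by
    have h6 : star G.S * (G.S * c * star H.S) * H.S = star G.S * c * H.S := by rw [hfix]
    have hL : star G.S * (G.S * c * star H.S) * H.S = c := by
      simp only [Matrix.mul_assoc]
      rw [hsSh, Matrix.mul_one, ← Matrix.mul_assoc, hsSg, Matrix.one_mul]
    have hR : star G.S * c * H.S = B := by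
      rw [hcdef]
      simp only [Matrix.mul_assoc]
      rw [hsSh, Matrix.mul_one, ← Matrix.mul_assoc, hsSg, Matrix.one_mul]
    rw [hL, hR] at h6
    rw [hcdef] at h6
    exact h6
  refine ⟨goal1, fun i α => ?_⟩
  calc (b i α : ℂ) = B i α := rfl
    _ = (G.S * B * star H.S) i α := by rw [hfinal]
    _ = ∑ j, ∑ β, G.S i j * star (H.S α β) * (b j β : ℂ) := by
        rw [hmul3]
        exact Finset.sum_congr rfl fun j _ => Finset.sum_congr rfl fun β _ => by
          rw [hBa]; ring
end
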